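/- For every n ≥ 1, the polynomial χ_n(X) = X^n - X^{n-1} - ... - X - 1 ∈ ℂ[X] has no multiple roots, i.e. it is squarefree (separable). -/

import Mathlib

open Polynomial

-- nat inequality: 3(n+1) ≤ 2^(n+1) for n ≥ 3
lemma aux_nat (n : ℕ) (hn : 3 ≤ n) : 3 * (n + 1) ≤ 2 ^ (n + 1) := by
  induction n with
  | zero => omega
  | succ m ih =>
    rcases Nat.lt_or_ge m 3 with h | h
    · interval_cases m <;> simp_all
    · have := ih h
      have : 3 * (m + 2) ≤ 2 * (3 * (m + 1)) := by omega
      calc 3 * (m + 1 + 1) ≤ 2 * (3 * (m + 1)) := by omega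
        _ ≤ 2 * 2 ^ (m + 1) := by omega
        _ = 2 ^ (m + 1 + 1) := by ring

lemma aux_real (n : ℕ) (hn : 2 ≤ n) :
    ((n : ℝ) + 1) / 2 < ((2 * n) / (n + 1)) ^ n := by
  have hnpos : (0 : ℝ) < n := by positivity
  have hnp1 : (0 : ℝ) < (n : ℝ) + 1 := by positivity
  rcases eq_or_lt_of_le hn with h2 | h3
  · subst_vars
    norm_num
  · have hn3 : 3 ≤ n := h3
    -- (1+1/n)^n ≤ e < 3
    have h1 : ((1 : ℝ) + 1 / n) ^ n ≤ Real.exp 1 := by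
      have := Real.add_one_le_exp (1 / (n : ℝ))
      calc ((1 : ℝ) + 1 / n) ^ n ≤ Real.exp (1 / n) ^ n := by
            apply pow_le_pow_left₀ (by positivity) (by linarith)
        _ = Real.exp (n * (1 / n)) := by rw [← Real.exp_nat_mul]
        _ = Real.exp 1 := by rw [mul_one_div, div_self hnpos.ne']
    have he : Real.exp 1 < 3 := by
      have := Real.exp_one_lt_d9; linarith
    have h13 : ((1 : ℝ) + 1 / n) ^ n < 3 := lt_of_le_of_lt h1 he
    -- so ((n+1)/n)^n < 3, so (n/(n+1))^n > 1/3
    have hval : ((n : ℝ) + 1) / n = 1 + 1 / n := by field_simp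
    have h2' : (((n : ℝ) + 1) / n) ^ n < 3 := by rw [hval]; exact h13
    have hfr : ((n : ℝ) / (n + 1)) ^ n = ((((n : ℝ) + 1) / n) ^ n)⁻¹ := by
      rw [← inv_pow]
      congr 1
      field_simp
    have hpos : (0 : ℝ) < (((n : ℝ) + 1) / n) ^ n := by positivity
    have h4 : (1 : ℝ) / 3 < ((n : ℝ) / (n + 1)) ^ n := by
      rw [hfr, one_div]
      exact inv_strictAnti₀ hpos h2'  -- maybe wrong name
    -- 2^(n+1) ≥ 3(n+1)
    have h5 : 3 * ((n : ℝ) + 1) ≤ 2 ^ (n + 1) := by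
      have := aux_nat n hn3
      calc 3 * ((n : ℝ) + 1) = ((3 * (n + 1) : ℕ) : ℝ) := by push_cast; ring
        _ ≤ ((2 ^ (n + 1) : ℕ) : ℝ) := by exact_mod_cast this
        _ = 2 ^ (n + 1) := by push_cast; ring
    calc ((n : ℝ) + 1) / 2 ≤ 2 ^ n * (1 / 3) := by
          rw [pow_succ] at h5; nlinarith
      _ < 2 ^ n * ((n : ℝ) / (n + 1)) ^ n := by
          apply mul_lt_mul_of_pos_left h4 (by positivity)
      _ = ((2 * n) / (n + 1)) ^ n := by
          rw [← mul_pow]; congr 1; field_simp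

theorem nbonacci_char_poly_squarefree (n : ℕ) (hn : 1 ≤ n) :
    Squarefree ((Polynomial.X : Polynomial ℂ) ^ n - ∑ i ∈ Finset.range n, Polynomial.X ^ i) := by
  set p : Polynomial ℂ := X ^ n - ∑ i ∈ Finset.range n, X ^ i with hp
  rcases eq_or_lt_of_le hn with h1 | hn2
  · -- n = 1
    have : p = X - Polynomial.C 1 := by
      rw [hp, ← h1]; simp
    rw [this]
    exact (Polynomial.irreducible_X_sub_C (1 : ℂ)).squarefree
  · have hn2 : 2 ≤ n := hn2
    -- p ≠ 0 since eval 0 p = -1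
    have hpe0 : p.eval 0 = -1 := by
      have : ∑ i ∈ Finset.range n, (0:ℂ) ^ i = 1 := by
        rw [show n = n - 1 + 1 by omega, Finset.sum_range_succ']
        simp
      simp [hp, Polynomial.eval_finset_sum, zero_pow (by omega : n ≠ 0), this]
    have hp0 : p ≠ 0 := fun h => by simp [h] at hpe0
    intro x hx
    by_contra hu
    have hx0 : x ≠ 0 := fun h => hp0 (by simpa [h] using hx)
    have hdeg : x.degree ≠ 0 := fun h => hu (Polynomial.isUnit_iff_degree_eq_zero.mpr h)
    obtain ⟨α, hα⟩ := Complex.exists_root (by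
      exact Polynomial.degree_pos_of_ne_zero_of_nonunit hx0 hu : 0 < x.degree)
    have hXα : (X - Polynomial.C α) ∣ x := Polynomial.dvd_iff_isRoot.mpr hα
    have hdvd2 : (X - Polynomial.C α) ^ 2 ∣ p := by
      calc (X - Polynomial.C α) ^ 2 = (X - Polynomial.C α) * (X - Polynomial.C α) := sq _
        _ ∣ x * x := mul_dvd_mul hXα hXα
        _ ∣ p := hx
    -- p(α) = 0
    have hpα : p.eval α = 0 := by
      have : (X - Polynomial.C α) ∣ p := dvd_trans (dvd_pow_self _ (by norm_num)) hdvd2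
      exact Polynomial.eval_eq_zero_of_dvd_of_eval_eq_zero this (by simp)
    have hpα' : α ^ n = ∑ i ∈ Finset.range n, α ^ i := by
      have := hpα
      simp [hp, Polynomial.eval_finset_sum] at this
      linear_combination this
    have hα0 : α ≠ 0 := by
      intro h; rw [h] at hpα; rw [hpα] at hpe0; norm_num at hpe0
    -- the auxiliary polynomial g = (X-1)*p = X^(n+1) - 2 X^n + 1
    set g : Polynomial ℂ := (X - 1) * p with hgdef
    have hg : g = X ^ (n + 1) - 2 * X ^ n + 1 := by
      have hgs := geom_sum_mul (X : Polynomial ℂ) n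
      rw [hgdef, hp]
      linear_combination -hgs
    obtain ⟨r, hr⟩ : (X - Polynomial.C α) ^ 2 ∣ g := hdvd2.mul_left _
    have heg : g.eval α = 0 := by rw [hr]; simp
    have heg' : α ^ (n + 1) - 2 * α ^ n + 1 = 0 := by
      have := heg; rw [hg] at this; simpa using this
    have hd0 : (g.derivative).eval α = 0 := by
      rw [hr]
      simp [Polynomial.derivative_mul, Polynomial.derivative_pow]
    have hd1 : ((n : ℂ) + 1) * α ^ n - 2 * ((n : ℂ) * α ^ (n - 1)) = 0 := by
      have := hd0
      rw [hg] at this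
      simp [Polynomial.derivative_X_pow] at this
      exact this
    have hne : (n : ℂ) + 1 ≠ 0 := by
      have : ((n + 1 : ℕ) : ℂ) ≠ 0 := Nat.cast_ne_zero.mpr (by omega)
      push_cast at this; exact this
    have hpow : α ^ n = α ^ (n - 1) * α := by
      rw [← pow_succ]; congr 1; omega
    have hαval : α = 2 * (n : ℂ) / ((n : ℂ) + 1) := by
      have hne' : α ^ (n - 1) ≠ 0 := pow_ne_zero _ hα0
      have h2 : (((n : ℂ) + 1) * α - 2 * (n : ℂ)) * α ^ (n - 1) = 0 := by
        rw [hpow] at hd1; linear_combination hd1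
      rcases mul_eq_zero.mp h2 with h | h
      · field_simp
        linear_combination h
      · exact absurd h hne'
    have hfin : α ^ n = ((n : ℂ) + 1) / 2 := by
      have h2α : α - 2 = -2 / ((n : ℂ) + 1) := by
        rw [hαval]; field_simp; ring
      have hm : α ^ n * (α - 2) = -1 := by
        rw [pow_succ] at heg'; linear_combination heg'
      rw [h2α] at hm
      field_simp at hm ⊢
      linear_combination -hm
    -- transfer to ℝ and contradict aux_real
    have hre : ((2 * (n : ℝ) / ((n : ℝ) + 1)) ^ n : ℝ) = (((n : ℝ) + 1) / 2 : ℝ) := by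
      have : (((2 * (n : ℝ) / ((n : ℝ) + 1)) ^ n : ℝ) : ℂ) = ((((n : ℝ) + 1) / 2 : ℝ) : ℂ) := by
        push_cast
        rw [← hαval, hfin]
      exact_mod_cast this
    have := aux_real n hn2
    rw [hre] at this
    exact lt_irrefl _ this
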